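/- Let x, y be indeterminates, Z_A = y/2, Z_B = (1−x)/2, Z_C = (1−y)/2, Z_D = x/2 in ℚ(x,y), and let σ = A+B+C+D. A polynomial f₀ ∈ ℤ[A,B,C,D] of degree 1 satisfies 2·f₀(Z_A,Z_B,Z_C,Z_D) = Z_A+Z_B+Z_C+Z_D if and only if f₀ = (B+D) + m·(A−B+C−D) for some integer m. -/

import Mathlib

open MvPolynomial

lemma deg_one_single (d : Fin 4 →₀ ℕ) (hd : Finsupp.weight 1 d = 1) :
    ∃ i, d = Finsupp.single i 1 := by
  rw [Finsupp.weight_apply, Finsupp.sum_fintype _ _ (fun _ => rfl)] at hd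
  simp only [Pi.one_apply, smul_eq_mul, mul_one, Fin.sum_univ_four] at hd
  rcases Nat.eq_zero_or_pos (d 0) with h0 | h0
  · rcases Nat.eq_zero_or_pos (d 1) with h1 | h1
    · rcases Nat.eq_zero_or_pos (d 2) with h2 | h2
      · exact ⟨3, Finsupp.ext fun i => by fin_cases i <;> simp [Finsupp.single_apply] <;> omega⟩
      · exact ⟨2, Finsupp.ext fun i => by fin_cases i <;> simp [Finsupp.single_apply] <;> omega⟩
    · exact ⟨1, Finsupp.ext fun i => by fin_cases i <;> simp [Finsupp.single_apply] <;> omega⟩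
  · exact ⟨0, Finsupp.ext fun i => by fin_cases i <;> simp [Finsupp.single_apply] <;> omega⟩

lemma decomp (f : MvPolynomial (Fin 4) ℤ) (hf : f.IsHomogeneous 1) :
    f = C (coeff (Finsupp.single 0 1) f) * X 0 + C (coeff (Finsupp.single 1 1) f) * X 1
      + C (coeff (Finsupp.single 2 1) f) * X 2 + C (coeff (Finsupp.single 3 1) f) * X 3 := by
  ext d
  simp only [coeff_add, coeff_C_mul, coeff_X']
  by_cases h : ∃ i, d = Finsupp.single i 1
  · obtain ⟨i, rfl⟩ := h
    fin_cases i <;> simp [Finsupp.single_eq_single_iff]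
  · have hz : coeff d f = 0 := by
      by_contra hc
      exact h (deg_one_single d (hf hc))
    rw [hz]
    have : ∀ i : Fin 4, ¬ (Finsupp.single i 1 = d) := fun i hi => h ⟨i, hi.symm⟩
    simp [this]

set_option maxHeartbeats 1000000 in
theorem stmt_15 (f₀ : MvPolynomial (Fin 4) ℤ) (hf₀ : f₀.IsHomogeneous 1) :
    (let K := FractionRing (MvPolynomial (Fin 2) ℚ)
     let x : K := algebraMap (MvPolynomial (Fin 2) ℚ) K (MvPolynomial.X 0)
     let y : K := algebraMap (MvPolynomial (Fin 2) ℚ) K (MvPolynomial.X 1)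
     let Z : Fin 4 → K := ![y / 2, (1 - x) / 2, (1 - y) / 2, x / 2]
     2 * MvPolynomial.aeval Z f₀ = Z 0 + Z 1 + Z 2 + Z 3) ↔
    ∃ m : ℤ, f₀ = (X 1 + X 3) + C m * (X 0 - X 1 + X 2 - X 3) := by
  simp only [Matrix.cons_val_zero, Matrix.cons_val_one, Matrix.head_cons,
    Matrix.cons_val_two, Matrix.tail_cons, Matrix.cons_val_three]
  set K := FractionRing (MvPolynomial (Fin 2) ℚ) with hK
  set φ := algebraMap (MvPolynomial (Fin 2) ℚ) K with hφ
  have hinj : Function.Injective φ := IsFractionRing.injective _ _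
  haveI : CharZero K := charZero_of_injective_algebraMap hinj
  have h2 : (2 : K) ≠ 0 := two_ne_zero
  set x : K := φ (X 0) with hx
  set y : K := φ (X 1) with hy
  set a := coeff (Finsupp.single 0 1) f₀ with ha'
  set b := coeff (Finsupp.single 1 1) f₀ with hb'
  set c := coeff (Finsupp.single 2 1) f₀ with hc'
  set d := coeff (Finsupp.single 3 1) f₀ with hd'
  have hca : ∀ n : ℤ, φ (C (n : ℚ)) = (n : K) := fun n => by
    have h1 : (C ((n : ℚ)) : MvPolynomial (Fin 2) ℚ) = ((n : ℤ) : MvPolynomial (Fin 2) ℚ) :=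
      map_intCast (C : ℚ →+* MvPolynomial (Fin 2) ℚ) n
    rw [h1, map_intCast]
  have heval : aeval ![y / 2, (1 - x) / 2, (1 - y) / 2, x / 2] f₀
      = (a : K) * (y / 2) + (b : K) * ((1 - x) / 2) + (c : K) * ((1 - y) / 2)
        + (d : K) * (x / 2) := by
    conv_lhs => rw [decomp f₀ hf₀]
    simp [algebraMap_int_eq, eq_intCast]
    rfl
  rw [heval]
  constructor
  · intro H
    have H' : (a : K) * y + (b : K) * (1 - x) + (c : K) * (1 - y) + (d : K) * x = 1 := by
      linear_combination H
    have key : φ (C (a : ℚ) * X 1 + C (b : ℚ) * (1 - X 0) + C (c : ℚ) * (1 - X 1)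
        + C (d : ℚ) * X 0) = φ 1 := by
      simp only [map_add, map_mul, map_sub, map_one, hca]
      exact H'
    have hpoly := hinj key
    have hpoly' : C (a : ℚ) * X 1 + (C (b : ℚ) - C (b : ℚ) * X 0)
        + (C (c : ℚ) - C (c : ℚ) * X 1) + C (d : ℚ) * X 0 = (1 : MvPolynomial (Fin 2) ℚ) := by
      linear_combination hpoly
    have hne : ∀ i : Fin 2, (0 : Fin 2 →₀ ℕ) ≠ Finsupp.single i 1 := fun i h => by
      simpa using (Finsupp.single_eq_zero.mp h.symm)
    have e1 : (a : ℚ) - c = 0 := by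
      have h := congrArg (coeff (Finsupp.single (1 : Fin 2) 1)) hpoly'
      simp only [coeff_add, coeff_sub, coeff_C_mul, coeff_C, coeff_X', coeff_one] at h
      norm_num [Finsupp.single_eq_single_iff, Finsupp.single_eq_zero, hne 0, hne 1] at h
      linarith [h]
    have e2 : (d : ℚ) - b = 0 := by
      have h := congrArg (coeff (Finsupp.single (0 : Fin 2) 1)) hpoly'
      simp only [coeff_add, coeff_sub, coeff_C_mul, coeff_C, coeff_X', coeff_one] at h
      norm_num [Finsupp.single_eq_single_iff, Finsupp.single_eq_zero, hne 0, hne 1] at h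
      linarith [h]
    have e3 : (b : ℚ) + c = 1 := by
      have h := congrArg (coeff (0 : Fin 2 →₀ ℕ)) hpoly'
      simp only [coeff_add, coeff_sub, coeff_C_mul, coeff_C, coeff_X', coeff_one] at h
      norm_num [Finsupp.single_eq_zero] at h
      linarith [h]
    have ea : c = a := by exact_mod_cast (by linarith : (c : ℚ) = a)
    have eb : d = b := by exact_mod_cast (by linarith : (d : ℚ) = b)
    have ec : b = 1 - a := by exact_mod_cast (by linarith : (b : ℚ) = 1 - a)
    refine ⟨a, ?_⟩
    conv_lhs => rw [decomp f₀ hf₀]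
    rw [← ha', ← hb', ← hc', ← hd', ea, eb, ec]
    simp only [map_sub, map_one, map_intCast]
    ring
  · rintro ⟨m, rfl⟩
    have ha : a = m := by
      rw [ha']
      simp only [coeff_add, coeff_sub, coeff_C_mul, coeff_X']
      simp [Finsupp.single_eq_single_iff]
      try ring
    have hb : b = 1 - m := by
      rw [hb']
      simp only [coeff_add, coeff_sub, coeff_C_mul, coeff_X']
      simp [Finsupp.single_eq_single_iff]
      try ring
    have hc : c = m := by
      rw [hc']
      simp only [coeff_add, coeff_sub, coeff_C_mul, coeff_X']
      simp [Finsupp.single_eq_single_iff]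
      try ring
    have hd : d = 1 - m := by
      rw [hd']
      simp only [coeff_add, coeff_sub, coeff_C_mul, coeff_X']
      simp [Finsupp.single_eq_single_iff]
      try ring
    rw [ha, hb, hc, hd]
    push_cast
    field_simp
    ring
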